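/- Let n = 4 with index pairs A = {1,2} and B = {3,4}, and let z_1, z_2, z_3, z_4 ∈ ℝ^d satisfy, for some 0 < δ < ζ: ‖z_1 − z_2‖ < δ, ‖z_3 − z_4‖ < δ, and ‖z_i − z_j‖ > ζ for all other pairs (i,j) with i ≠ j. Let L > 0 and assume ζ > (1/L)·log(1/(√2 − 1)) and δ < (1/L)·(2·log σ(Lζ) + log 2), where σ(t) = 1/(1 + exp(−t)) is the sigmoid function. For a bijection π of {1,2,3,4} (representing the encoder matching x_i ↦ z_{π(i)}), define V(π) = sSup { ∑_{i∈A} ∑_{j∈A} f i (π j) + ∑_{k∈B} ∑_{ℓ∈B} f k (π ℓ) : f ∈ 𝒢_L }, which is the optimal denoising reconstruction objective (up to the positive constant factor 1/8) when the perturbation process C exchanges x_1 ↔ x_2 and x_3 ↔ x_4 each with probability 1/2. Then the denoising objective achieves its largest value at pair-preserving matchings: for every bijection π with {π(1), π(2)} = {1,2} or {π(1), π(2)} = {3,4}, and every bijection π′, one has V(π′) ≤ V(π). -/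

import Mathlib

open Real Finset

/-- The _root_.sigmoid function. -/
noncomputable def sigmoid (t : ℝ) : ℝ := 1 / (1 + Real.exp (-t))

/-- The decoder class `𝒢_L`: log-likelihood tables `f i j = log p_G(x_i | z_j)` such that
(i) each column is a log sub-probability vector, and
(ii) the log-likelihood is `L`-Lipschitz in the latent variable. -/
def decoderClass {n d : ℕ} (L : ℝ) (z : Fin n → EuclideanSpace ℝ (Fin d)) :
    Set (Fin n → Fin n → ℝ) :=
  {f | (∀ j, ∑ i, Real.exp (f i j) ≤ 1) ∧
       ∀ i j k, |f i j - f i k| ≤ L * ‖z j - z k‖}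

/-- The optimal denoising reconstruction objective (up to the factor 1/8) for the encoder
matching `x_i ↦ z_{π i}`, where the pairs are `A = {0,1}` and `B = {2,3}`. -/
noncomputable def V {d : ℕ} (L : ℝ) (z : Fin 4 → EuclideanSpace ℝ (Fin d))
    (e : Equiv.Perm (Fin 4)) : ℝ :=
  sSup {y : ℝ | ∃ f ∈ decoderClass L z, y =
    (∑ i ∈ ({0, 1} : Finset (Fin 4)), ∑ j ∈ ({0, 1} : Finset (Fin 4)), f i (e j)) +
    (∑ k ∈ ({2, 3} : Finset (Fin 4)), ∑ l ∈ ({2, 3} : Finset (Fin 4)), f k (e l))}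

namespace Stmt1Aux

lemma sigmoid_pos (t : ℝ) : 0 < _root_.sigmoid t := by unfold _root_.sigmoid; positivity

/-- The reconstruction objective as a named function. -/
def objS (f : Fin 4 → Fin 4 → ℝ) (e : Equiv.Perm (Fin 4)) : ℝ :=
  (∑ i ∈ ({0, 1} : Finset (Fin 4)), ∑ j ∈ ({0, 1} : Finset (Fin 4)), f i (e j)) +
  (∑ k ∈ ({2, 3} : Finset (Fin 4)), ∑ l ∈ ({2, 3} : Finset (Fin 4)), f k (e l))

lemma objS_eq (f : Fin 4 → Fin 4 → ℝ) (e : Equiv.Perm (Fin 4)) :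
    objS f e = (f 0 (e 0) + f 0 (e 1) + f 1 (e 0) + f 1 (e 1))
      + (f 2 (e 2) + f 2 (e 3) + f 3 (e 2) + f 3 (e 3)) := by
  simp only [objS, Finset.sum_pair (show (0:Fin 4) ≠ 1 by decide),
    Finset.sum_pair (show (2:Fin 4) ≠ 3 by decide)]
  ring

/-- The objective for the identity (pair-preserving, type A) matching. -/
def SA (f : Fin 4 → Fin 4 → ℝ) : ℝ :=
  (f 0 0 + f 0 1 + f 1 0 + f 1 1) + (f 2 2 + f 2 3 + f 3 2 + f 3 3)

def TA {d : ℕ} (L : ℝ) (z : Fin 4 → EuclideanSpace ℝ (Fin d)) : Set ℝ :=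
  {y | ∃ f ∈ decoderClass L z, y = SA f}

lemma f_nonpos {d : ℕ} {L : ℝ} {z : Fin 4 → EuclideanSpace ℝ (Fin d)}
    {f : Fin 4 → Fin 4 → ℝ} (hf : f ∈ decoderClass L z) (i j : Fin 4) : f i j ≤ 0 := by
  have h := hf.1 j
  have h1 : Real.exp (f i j) ≤ 1 :=
    le_trans (Finset.single_le_sum (f := fun k => Real.exp (f k j))
      (fun k _ => (Real.exp_pos _).le) (Finset.mem_univ i)) h
  exact Real.exp_le_one_iff.mp h1

lemma fin4_cross : ∀ j k : Fin 4, ¬((j.val < 2) ↔ (k.val < 2)) →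
    j ≠ k ∧ ({j, k} : Finset (Fin 4)) ≠ {0, 1} ∧ ({j, k} : Finset (Fin 4)) ≠ {2, 3} := by
  decide

/-- The near-optimal decoder for pair-preserving matchings. -/
noncomputable def fA (L ζ : ℝ) (i j : Fin 4) : ℝ :=
  Real.log (_root_.sigmoid (L * ζ) / 2) - (if (i.val < 2 ↔ j.val < 2) then 0 else L * ζ)

lemma fA_mem {d : ℕ} (L ζ : ℝ) (hL : 0 < L) (hζ : 0 < ζ)
    (z : Fin 4 → EuclideanSpace ℝ (Fin d))
    (hfar : ∀ i j : Fin 4, i ≠ j → ({i, j} : Finset (Fin 4)) ≠ {0, 1} →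
      ({i, j} : Finset (Fin 4)) ≠ {2, 3} → ζ < ‖z i - z j‖) :
    fA L ζ ∈ decoderClass L z := by
  have hhalf : (0:ℝ) < _root_.sigmoid (L*ζ)/2 := by have := sigmoid_pos (L*ζ); linarith
  constructor
  · intro j
    have key : _root_.sigmoid (L*ζ) + _root_.sigmoid (L*ζ) * Real.exp (-(L*ζ)) = 1 := by
      unfold _root_.sigmoid
      have h1 : 0 < 1 + Real.exp (-(L*ζ)) := by positivity
      field_simp
    have hv : ∀ i : Fin 4, Real.exp (fA L ζ i j) =
        if (i.val < 2 ↔ j.val < 2) then _root_.sigmoid (L*ζ)/2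
        else _root_.sigmoid (L*ζ)/2 * Real.exp (-(L*ζ)) := by
      intro i
      by_cases h : (i.val < 2 ↔ j.val < 2)
      · rw [if_pos h]
        simp only [fA, if_pos h, sub_zero, Real.exp_log hhalf]
      · rw [if_neg h]
        simp only [fA, if_neg h, Real.exp_sub, Real.exp_log hhalf, Real.exp_neg]
        ring
    have c0 : ((0:Fin 4).val < 2) := by decide
    have c1 : ((1:Fin 4).val < 2) := by decide
    have c2 : ¬((2:Fin 4).val < 2) := by decide
    have c3 : ¬((3:Fin 4).val < 2) := by decide
    rw [Fin.sum_univ_four, hv 0, hv 1, hv 2, hv 3]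
    by_cases hj : j.val < 2
    · rw [if_pos (iff_of_true c0 hj), if_pos (iff_of_true c1 hj),
        if_neg (fun h => c2 (h.mpr hj)), if_neg (fun h => c3 (h.mpr hj))]
      linarith [key]
    · rw [if_neg (fun h => hj (h.mp c0)), if_neg (fun h => hj (h.mp c1)),
        if_pos (iff_of_false c2 hj), if_pos (iff_of_false c3 hj)]
      linarith [key]
  · intro i j k
    simp only [fA]
    by_cases hjk : ((j.val < 2) ↔ (k.val < 2))
    · by_cases hij : ((i.val < 2) ↔ (j.val < 2))
      · rw [if_pos hij, if_pos (hij.trans hjk)]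
        simpa using (by positivity : (0:ℝ) ≤ L * ‖z j - z k‖)
      · rw [if_neg hij, if_neg (fun h => hij (h.trans hjk.symm))]
        simpa using (by positivity : (0:ℝ) ≤ L * ‖z j - z k‖)
    · obtain ⟨hne, hp1, hp2⟩ := fin4_cross j k hjk
      have hz : ζ ≤ ‖z j - z k‖ := (hfar j k hne hp1 hp2).le
      have hLζ : (0:ℝ) ≤ L * ζ := by positivity
      by_cases hij : ((i.val < 2) ↔ (j.val < 2))
      · rw [if_pos hij, if_neg (fun h => hjk (hij.symm.trans h))]
        rw [show Real.log (_root_.sigmoid (L*ζ)/2) - 0 - (Real.log (_root_.sigmoid (L*ζ)/2) - L*ζ) = L*ζ by ring,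
          abs_of_nonneg hLζ]
        exact mul_le_mul_of_nonneg_left hz hL.le
      · have hik : (i.val < 2 ↔ k.val < 2) := by tauto
        rw [if_neg hij, if_pos hik]
        rw [show Real.log (_root_.sigmoid (L*ζ)/2) - (L*ζ) - (Real.log (_root_.sigmoid (L*ζ)/2) - 0) = -(L*ζ) by ring,
          abs_neg, abs_of_nonneg hLζ]
        exact mul_le_mul_of_nonneg_left hz hL.le

lemma fA_same (L ζ : ℝ) (i j : Fin 4) (h : i.val < 2 ↔ j.val < 2) :
    fA L ζ i j = Real.log (_root_.sigmoid (L * ζ) / 2) := by simp [fA, h]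

lemma SA_fA (L ζ : ℝ) : SA (fA L ζ) = 8 * Real.log (_root_.sigmoid (L * ζ) / 2) := by
  rw [SA, fA_same L ζ 0 0 (by decide), fA_same L ζ 0 1 (by decide),
    fA_same L ζ 1 0 (by decide), fA_same L ζ 1 1 (by decide),
    fA_same L ζ 2 2 (by decide), fA_same L ζ 2 3 (by decide),
    fA_same L ζ 3 2 (by decide), fA_same L ζ 3 3 (by decide)]
  ring

/-- Core analytic bound: a "mass-stealing" estimate for a pair of close columns. -/
lemma group_bound (p q u v t : ℝ) (ht : 0 < t)
    (h2 : Real.exp u + Real.exp v ≤ 1 - t * (Real.exp p + Real.exp q)) :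
    p + q + u + v ≤ -2 * Real.log t - 8 * Real.log 2 := by
  set A := Real.exp p + Real.exp q with hA
  set C := Real.exp u + Real.exp v with hC
  have hA0 : 0 < A := by positivity
  have hC0 : 0 < C := by positivity
  have hpq : p + q ≤ Real.log ((A/2)^2) := by
    have h : Real.exp (p+q) ≤ (A/2)^2 := by
      rw [Real.exp_add]
      nlinarith [sq_nonneg (Real.exp p - Real.exp q)]
    calc p + q = Real.log (Real.exp (p+q)) := (Real.log_exp _).symm
    _ ≤ Real.log ((A/2)^2) := Real.log_le_log (Real.exp_pos _) h
  have huv : u + v ≤ Real.log ((C/2)^2) := by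
    have h : Real.exp (u+v) ≤ (C/2)^2 := by
      rw [Real.exp_add]
      nlinarith [sq_nonneg (Real.exp u - Real.exp v)]
    calc u + v = Real.log (Real.exp (u+v)) := (Real.log_exp _).symm
    _ ≤ Real.log ((C/2)^2) := Real.log_le_log (Real.exp_pos _) h
  have hAC : A * C ≤ 1/(4*t) := by
    rw [le_div_iff₀ (by positivity)]
    nlinarith [sq_nonneg (2*t*A - 1), mul_pos ht hA0, mul_le_mul_of_nonneg_left h2
      (by positivity : (0:ℝ) ≤ 4*(t*A))]
  have hlogAC : Real.log (A*C) ≤ Real.log (1/(4*t)) := Real.log_le_log (by positivity) hAC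
  have e1 : Real.log ((A/2)^2) = 2*Real.log A - 2*Real.log 2 := by
    rw [show ((A/2)^2 : ℝ) = (A/2)*(A/2) by ring, Real.log_mul (by positivity) (by positivity),
      Real.log_div hA0.ne' two_ne_zero]
    ring
  have e2 : Real.log ((C/2)^2) = 2*Real.log C - 2*Real.log 2 := by
    rw [show ((C/2)^2 : ℝ) = (C/2)*(C/2) by ring, Real.log_mul (by positivity) (by positivity),
      Real.log_div hC0.ne' two_ne_zero]
    ring
  have e3 : Real.log (A*C) = Real.log A + Real.log C := Real.log_mul hA0.ne' hC0.ne'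
  have e4 : Real.log (1/(4*t)) = -(2*Real.log 2) - Real.log t := by
    rw [one_div, Real.log_inv, Real.log_mul (by norm_num) ht.ne',
      show (4:ℝ) = 2*2 by norm_num, Real.log_mul two_ne_zero two_ne_zero]
    ring
  rw [e3, e4] at hlogAC
  rw [e1] at hpq
  rw [e2] at huv
  linarith

/-- Upper bound on the objective of a mixed (non pair-preserving) matching. -/
lemma MIX {d : ℕ} (L δ : ℝ) (hL : 0 < L) (z : Fin 4 → EuclideanSpace ℝ (Fin d))
    (f : Fin 4 → Fin 4 → ℝ) (hf : f ∈ decoderClass L z)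
    (a b c e : Fin 4) (hac : ‖z a - z c‖ < δ) (hbd : ‖z b - z e‖ < δ) :
    (f 0 a + f 0 b + f 1 a + f 1 b) + (f 2 c + f 2 e + f 3 c + f 3 e)
      ≤ 4*(L*δ) - 16 * Real.log 2 := by
  obtain ⟨hcol, hlip⟩ := hf
  set t := Real.exp (-(L*δ)) with htdef
  have ht : 0 < t := Real.exp_pos _
  have trans : ∀ i x y : Fin 4, ‖z x - z y‖ < δ → Real.exp (f i x) * t ≤ Real.exp (f i y) := by
    intro i x y hxy
    have hlip' := hlip i x y
    have h2 : L * ‖z x - z y‖ ≤ L * δ := mul_le_mul_of_nonneg_left hxy.le hL.le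
    have h3 := (abs_le.mp (le_trans hlip' h2)).2
    calc Real.exp (f i x) * t = Real.exp (f i x - L*δ) := by
          rw [htdef, ← Real.exp_add]; ring_nf
    _ ≤ Real.exp (f i y) := Real.exp_le_exp.mpr (by linarith)
  have colsum : ∀ j, Real.exp (f 0 j) + Real.exp (f 1 j) + Real.exp (f 2 j) + Real.exp (f 3 j) ≤ 1 := by
    intro j; have := hcol j; rwa [Fin.sum_univ_four] at this
  have hCc : Real.exp (f 2 c) + Real.exp (f 3 c) ≤ 1 - t * (Real.exp (f 0 a) + Real.exp (f 1 a)) := by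
    have h1 := trans 0 a c hac
    have h2 := trans 1 a c hac
    have h3 := colsum c
    have h4 : t * (Real.exp (f 0 a) + Real.exp (f 1 a))
        = Real.exp (f 0 a) * t + Real.exp (f 1 a) * t := by ring
    linarith
  have hDd : Real.exp (f 2 e) + Real.exp (f 3 e) ≤ 1 - t * (Real.exp (f 0 b) + Real.exp (f 1 b)) := by
    have h1 := trans 0 b e hbd
    have h2 := trans 1 b e hbd
    have h3 := colsum e
    have h4 : t * (Real.exp (f 0 b) + Real.exp (f 1 b))
        = Real.exp (f 0 b) * t + Real.exp (f 1 b) * t := by ring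
    linarith
  have g1 := group_bound (f 0 a) (f 1 a) (f 2 c) (f 3 c) t ht hCc
  have g2 := group_bound (f 0 b) (f 1 b) (f 2 e) (f 3 e) t ht hDd
  have hlogt : Real.log t = -(L*δ) := Real.log_exp _
  rw [hlogt] at g1 g2
  linarith

/-- Swapping the two rows blocks preserves the decoder class. -/
lemma rowSwap_mem {d : ℕ} {L : ℝ} {z : Fin 4 → EuclideanSpace ℝ (Fin d)}
    {f : Fin 4 → Fin 4 → ℝ} (hf : f ∈ decoderClass L z) :
    (fun i j => f (i + 2) j) ∈ decoderClass L z := by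
  obtain ⟨hcol, hlip⟩ := hf
  constructor
  · intro j
    have h := hcol j
    rw [Fin.sum_univ_four] at h ⊢
    simp only [show (0:Fin 4)+2 = 2 from by decide, show (1:Fin 4)+2 = 3 from by decide,
      show (2:Fin 4)+2 = 0 from by decide, show (3:Fin 4)+2 = 1 from by decide]
    linarith
  · intro i j k
    exact hlip (i+2) j k

set_option maxHeartbeats 2000000 in
/-- The value of a pair-preserving matching equals the sup of the type-A objective. -/
lemma V_pp {d : ℕ} (L : ℝ) (z : Fin 4 → EuclideanSpace ℝ (Fin d)) (ee : Equiv.Perm (Fin 4))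
    (hee : ({ee 0, ee 1} : Finset (Fin 4)) = {0, 1} ∨
           ({ee 0, ee 1} : Finset (Fin 4)) = {2, 3}) :
    V L z ee = sSup (TA L z) := by
  have hVdef : V L z ee = sSup {y | ∃ f ∈ decoderClass L z, y = objS f ee} := rfl
  rw [hVdef]
  congr 1
  ext y
  simp only [Set.mem_setOf_eq, TA]
  have h4 : ∀ x : Fin 4, x = 0 ∨ x = 1 ∨ x = 2 ∨ x = 3 := by decide
  rcases h4 (ee 0) with h0|h0|h0|h0 <;> rcases h4 (ee 1) with h1|h1|h1|h1 <;>
    rcases h4 (ee 2) with h2|h2|h2|h2 <;> rcases h4 (ee 3) with h3|h3|h3|h3 <;>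
    first
    | exact absurd (ee.injective (h0.trans h1.symm)) (by decide)
    | exact absurd (ee.injective (h0.trans h2.symm)) (by decide)
    | exact absurd (ee.injective (h0.trans h3.symm)) (by decide)
    | exact absurd (ee.injective (h1.trans h2.symm)) (by decide)
    | exact absurd (ee.injective (h1.trans h3.symm)) (by decide)
    | exact absurd (ee.injective (h2.trans h3.symm)) (by decide)
    | (rw [h0, h1] at hee; exact absurd hee (by decide))
    | -- type A leaf
      (constructor <;>
        (rintro ⟨f, hf, rfl⟩
         refine ⟨f, hf, ?_⟩
         simp only [objS_eq, h0, h1, h2, h3, SA] <;> ring1))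
    | -- type B leaf
      (constructor <;>
        (rintro ⟨f, hf, rfl⟩
         refine ⟨fun i j => f (i + 2) j, rowSwap_mem hf, ?_⟩
         simp only [objS_eq, h0, h1, h2, h3, SA, show (0:Fin 4)+2 = 2 from by decide,
           show (1:Fin 4)+2 = 3 from by decide, show (2:Fin 4)+2 = 0 from by decide,
           show (3:Fin 4)+2 = 1 from by decide] <;> ring1))

end Stmt1Aux

open Stmt1Aux in
set_option maxHeartbeats 2000000 in
/-- Four-point theorem: under the stated geometry of the latent points and the stated
conditions on `δ`, `ζ`, the denoising objective achieves its largest value at the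
pair-preserving encoder matchings. -/
theorem stmt1 {d : ℕ} (L δ ζ : ℝ) (hL : 0 < L) (hδ : 0 < δ) (hδζ : δ < ζ)
    (z : Fin 4 → EuclideanSpace ℝ (Fin d))
    (h01 : ‖z 0 - z 1‖ < δ) (h23 : ‖z 2 - z 3‖ < δ)
    (hfar : ∀ i j : Fin 4, i ≠ j → ({i, j} : Finset (Fin 4)) ≠ {0, 1} →
      ({i, j} : Finset (Fin 4)) ≠ {2, 3} → ζ < ‖z i - z j‖)
    (hζ : ζ > 1 / L * Real.log (1 / (Real.sqrt 2 - 1)))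
    (hδ' : δ < 1 / L * (2 * Real.log (_root_.sigmoid (L * ζ)) + Real.log 2))
    (e : Equiv.Perm (Fin 4))
    (he : ({e 0, e 1} : Finset (Fin 4)) = {0, 1} ∨
          ({e 0, e 1} : Finset (Fin 4)) = {2, 3})
    (e' : Equiv.Perm (Fin 4)) :
    V L z e' ≤ V L z e := by
  have hs : 0 < _root_.sigmoid (L*ζ) := sigmoid_pos _
  have hζ0 : 0 < ζ := lt_trans hδ hδζ
  have hfA := fA_mem L ζ hL hζ0 z hfar
  have hbddTA : BddAbove (TA L z) := by
    refine ⟨0, ?_⟩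
    rintro y ⟨f, hf, rfl⟩
    have h := f_nonpos hf
    have := h 0 0; have := h 0 1; have := h 1 0; have := h 1 1
    have := h 2 2; have := h 2 3; have := h 3 2; have := h 3 3
    simp only [SA]
    linarith
  have hne : ∀ ee : Equiv.Perm (Fin 4),
      Set.Nonempty {y | ∃ f ∈ decoderClass L z, y = objS f ee} :=
    fun ee => ⟨objS (fA L ζ) ee, fA L ζ, hfA, rfl⟩
  have hVe : V L z e = sSup (TA L z) := V_pp L z e he
  have hce : 8 * Real.log (_root_.sigmoid (L * ζ) / 2) ≤ V L z e := by
    rw [hVe]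
    exact le_csSup hbddTA ⟨fA L ζ, hfA, (SA_fA L ζ).symm⟩
  have hLδ : L * δ < 2 * Real.log (_root_.sigmoid (L * ζ)) + Real.log 2 := by
    have h := mul_lt_mul_of_pos_left hδ' hL
    rwa [show L * (1 / L * (2 * Real.log (_root_.sigmoid (L * ζ)) + Real.log 2))
      = 2 * Real.log (_root_.sigmoid (L * ζ)) + Real.log 2 by field_simp] at h
  have hlog2 : (0:ℝ) ≤ Real.log 2 := Real.log_nonneg (by norm_num)
  have hlogdiv : Real.log (_root_.sigmoid (L * ζ) / 2)
      = Real.log (_root_.sigmoid (L * ζ)) - Real.log 2 := Real.log_div hs.ne' two_ne_zero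
  have hmid : 4*(L*δ) - 16 * Real.log 2 ≤ 8 * Real.log (_root_.sigmoid (L * ζ) / 2) := by
    rw [hlogdiv]; linarith
  have h10 : ‖z 1 - z 0‖ < δ := by rw [norm_sub_rev]; exact h01
  have h32 : ‖z 3 - z 2‖ < δ := by rw [norm_sub_rev]; exact h23
  have hVdef : V L z e' = sSup {y | ∃ f ∈ decoderClass L z, y = objS f e'} := rfl
  have h4 : ∀ x : Fin 4, x = 0 ∨ x = 1 ∨ x = 2 ∨ x = 3 := by decide
  rcases h4 (e' 0) with h0|h0|h0|h0 <;> rcases h4 (e' 1) with h1|h1|h1|h1 <;>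
    rcases h4 (e' 2) with h2|h2|h2|h2 <;> rcases h4 (e' 3) with h3|h3|h3|h3 <;>
    first
    | exact absurd (e'.injective (h0.trans h1.symm)) (by decide)
    | exact absurd (e'.injective (h0.trans h2.symm)) (by decide)
    | exact absurd (e'.injective (h0.trans h3.symm)) (by decide)
    | exact absurd (e'.injective (h1.trans h2.symm)) (by decide)
    | exact absurd (e'.injective (h1.trans h3.symm)) (by decide)
    | exact absurd (e'.injective (h2.trans h3.symm)) (by decide)
    | (rw [V_pp L z e' (by rw [h0, h1]; decide), hVe])
    | (rw [hVdef]
       refine le_trans (le_trans (csSup_le (hne e') ?_) hmid) hce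
       rintro y ⟨f, hf, rfl⟩
       rw [objS_eq, h0, h1, h2, h3]
       first
       | linarith [MIX L δ hL z f hf 0 2 1 3 h01 h23]
       | linarith [MIX L δ hL z f hf 0 3 1 2 h01 h32]
       | linarith [MIX L δ hL z f hf 1 2 0 3 h10 h23]
       | linarith [MIX L δ hL z f hf 1 3 0 2 h10 h32]
       | linarith [MIX L δ hL z f hf 2 0 3 1 h23 h01]
       | linarith [MIX L δ hL z f hf 2 1 3 0 h23 h10]
       | linarith [MIX L δ hL z f hf 3 0 2 1 h32 h01]
       | linarith [MIX L δ hL z f hf 3 1 2 0 h32 h10])
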